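/- Let G be a group and A ⊆ G a finite nonempty subset with |A·A·A| ≤ K·|A|. Let B = A ∪ A⁻¹ ∪ {1}. Then |B·B·B| ≤ 14·K³·|A|. -/

import Mathlib

open Pointwise
open Finset

namespace TriplingAux

variable {G : Type*} [Group G] [DecidableEq G] {A : Finset G} {K : ℝ}

private lemma aux_npp (hA : (#(A ^ 3) : ℝ) ≤ K * #A) : (#(A⁻¹ * A * A) : ℝ) ≤ K ^ 2 * #A := by
  obtain rfl | hA₀ := A.eq_empty_or_nonempty
  · simp
  have : 0 ≤ K := nonneg_of_mul_nonneg_left (hA.trans' <| by positivity) (by positivity)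
  refine le_of_mul_le_mul_left ?_ (by positivity : (0 : ℝ) < #A)
  calc
    (#A * #(A⁻¹ * A * A) : ℝ) = #A * #(A⁻¹ * (A * A)) := by rw [mul_assoc]
    _ ≤ #(A * A) * #(A * (A * A)) := by
      norm_cast; exact ruzsa_triangle_inequality_invMul_mul_mul A A (A * A)
    _ = #(A ^ 2) * #(A ^ 3) := by simp [pow_succ']
    _ ≤ (K * #A) * (K * #A) := by
      gcongr
      calc
        (#(A ^ 2) : ℝ) ≤ #(A ^ 3) := mod_cast hA₀.card_pow_mono (by norm_num)
        _ ≤ K * #A := hA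
    _ = #A * (K ^ 2 * #A) := by ring

private lemma aux_nnp (hA : (#(A ^ 3) : ℝ) ≤ K * #A) : (#(A⁻¹ * A⁻¹ * A) : ℝ) ≤ K ^ 2 * #A := by
  rw [← card_inv]
  simpa [mul_assoc] using aux_npp (A := A) (K := K) (by simpa)

private lemma aux_pnn (hA : (#(A ^ 3) : ℝ) ≤ K * #A) : (#(A * A⁻¹ * A⁻¹) : ℝ) ≤ K ^ 2 * #A := by
  simpa using aux_npp (A := A⁻¹) (by simpa)

private lemma aux_ppn (hA : (#(A ^ 3) : ℝ) ≤ K * #A) : (#(A * A * A⁻¹) : ℝ) ≤ K ^ 2 * #A := by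
  rw [← card_inv]
  simpa [mul_assoc] using aux_pnn (A := A) (K := K) (by simpa)

private lemma aux_pnp (hA : (#(A ^ 3) : ℝ) ≤ K * #A) : (#(A * A⁻¹ * A) : ℝ) ≤ K ^ 3 * #A := by
  obtain rfl | hA₀ := A.eq_empty_or_nonempty
  · simp
  have : 0 ≤ K := nonneg_of_mul_nonneg_left (hA.trans' <| by positivity) (by positivity)
  refine le_of_mul_le_mul_left ?_ (by positivity : (0 : ℝ) < #A)
  calc
    (#A * #(A * A⁻¹ * A) : ℝ) ≤ #(A * (A * A⁻¹)) * #(A * A) := by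
      norm_cast; simpa using ruzsa_triangle_inequality_invMul_mul_mul (A * A⁻¹) A A
    _ = #(A * A * A⁻¹) * #(A ^ 2) := by simp [pow_succ, mul_assoc]
    _ ≤ (K ^ 2 * #A) * (K * #A) := by
      gcongr
      · exact aux_ppn hA
      calc
        (#(A ^ 2) : ℝ) ≤ #(A ^ 3) := mod_cast hA₀.card_pow_mono (by norm_num)
        _ ≤ K * #A := hA
    _ = #A * (K ^ 3 * #A) := by ring

private lemma aux_npn (hA : (#(A ^ 3) : ℝ) ≤ K * #A) : (#(A⁻¹ * A * A⁻¹) : ℝ) ≤ K ^ 3 * #A := by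
  rw [← card_inv]
  simpa [mul_assoc] using aux_pnp (A := A) (K := K) (by simpa)

end TriplingAux

open TriplingAux

set_option maxHeartbeats 10000000 in
/-- If `A` is a finite nonempty subset of a group with `|A·A·A| ≤ K|A|`, and
`B = A ∪ A⁻¹ ∪ {1}`, then `|B·B·B| ≤ 14·K³·|A|`. -/
theorem tripling_symmetrization {G : Type*} [Group G] [DecidableEq G]
    (A : Finset G) (hA : A.Nonempty) (K : ℝ)
    (htriple : ((A * A * A).card : ℝ) ≤ K * A.card)
    (B : Finset G) (hB : B = A ∪ A⁻¹ ∪ {1}) :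
    ((B * B * B).card : ℝ) ≤ 14 * K ^ 3 * A.card := by
  subst hB
  have hApos : (0 : ℝ) < A.card := by exact_mod_cast hA.card_pos
  have hA3 : (#(A ^ 3) : ℝ) ≤ K * #A := by rw [pow_succ, pow_two]; exact htriple
  -- K ≥ 1
  have hK1 : 1 ≤ K := by
    have h1 : (A.card : ℝ) ≤ ((A * A * A).card : ℝ) := by
      exact_mod_cast (card_le_card_mul_right hA).trans (card_le_card_mul_right hA)
    nlinarith
  have hK0 : 0 ≤ K := le_trans zero_le_one hK1
  -- pair bounds
  have hAA : (#(A * A) : ℝ) ≤ K * #A := by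
    have : #(A * A) ≤ #(A * A * A) := card_le_card_mul_right hA
    calc (#(A * A) : ℝ) ≤ #(A * A * A) := by exact_mod_cast this
      _ ≤ K * #A := htriple
  have hnn : (#(A⁻¹ * A⁻¹) : ℝ) ≤ K * #A := by
    have : A⁻¹ * A⁻¹ = (A * A)⁻¹ := by rw [mul_inv_rev]
    rw [this, card_inv]; exact hAA
  have hpn : (#(A * A⁻¹) : ℝ) ≤ K ^ 2 * #A := by
    have h := ruzsa_triangle_inequality_mulInv_mulInv_mulInv A A⁻¹ A
    simp only [inv_inv, card_inv] at h
    have h' : (#(A * A⁻¹) : ℝ) * #A ≤ #(A * A) * #(A * A) := by exact_mod_cast h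
    nlinarith [Nat.cast_nonneg (α := ℝ) #(A * A⁻¹)]
  have hnp : (#(A⁻¹ * A) : ℝ) ≤ K ^ 2 * #A := by
    have h := ruzsa_triangle_inequality_invMul_invMul_invMul A A⁻¹ A
    simp only [inv_inv, card_inv] at h
    have h' : (#A : ℝ) * #(A⁻¹ * A) ≤ #(A * A) * #(A * A) := by exact_mod_cast h
    nlinarith [Nat.cast_nonneg (α := ℝ) #(A⁻¹ * A)]
  -- triple bounds
  have hnnn : (#(A⁻¹ * A⁻¹ * A⁻¹) : ℝ) ≤ K * #A := by
    have e : A⁻¹ * A⁻¹ * A⁻¹ = (A * A * A)⁻¹ := by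
      simp [mul_inv_rev, mul_assoc]
    rw [e, card_inv]; exact htriple
  have hppn : (#(A * A * A⁻¹) : ℝ) ≤ K ^ 2 * #A := aux_ppn hA3
  have hpnn : (#(A * A⁻¹ * A⁻¹) : ℝ) ≤ K ^ 2 * #A := aux_pnn hA3
  have hnpp : (#(A⁻¹ * A * A) : ℝ) ≤ K ^ 2 * #A := aux_npp hA3
  have hnnp : (#(A⁻¹ * A⁻¹ * A) : ℝ) ≤ K ^ 2 * #A := aux_nnp hA3
  have hpnp : (#(A * A⁻¹ * A) : ℝ) ≤ K ^ 3 * #A := aux_pnp hA3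
  have hnpn : (#(A⁻¹ * A * A⁻¹) : ℝ) ≤ K ^ 3 * #A := aux_npn hA3
  -- the covering union
  set U : Finset G := A * A * A ∪ A * A * A⁻¹ ∪ A * A⁻¹ * A ∪ A * A⁻¹ * A⁻¹ ∪
      A⁻¹ * A * A ∪ A⁻¹ * A * A⁻¹ ∪ A⁻¹ * A⁻¹ * A ∪ A⁻¹ * A⁻¹ * A⁻¹ ∪
      A * A ∪ A * A⁻¹ ∪ A⁻¹ * A ∪ A⁻¹ * A⁻¹ ∪ A ∪ A⁻¹ with hU
  have s00 : (A * A * A : Finset G) ⊆ U := fun x hx => by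
    simp only [hU, Finset.mem_union]; simp [hx]
  have s01 : (A * A * A⁻¹ : Finset G) ⊆ U := fun x hx => by
    simp only [hU, Finset.mem_union]; simp [hx]
  have s02 : (A * A⁻¹ * A : Finset G) ⊆ U := fun x hx => by
    simp only [hU, Finset.mem_union]; simp [hx]
  have s03 : (A * A⁻¹ * A⁻¹ : Finset G) ⊆ U := fun x hx => by
    simp only [hU, Finset.mem_union]; simp [hx]
  have s04 : (A⁻¹ * A * A : Finset G) ⊆ U := fun x hx => by
    simp only [hU, Finset.mem_union]; simp [hx]
  have s05 : (A⁻¹ * A * A⁻¹ : Finset G) ⊆ U := fun x hx => by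
    simp only [hU, Finset.mem_union]; simp [hx]
  have s06 : (A⁻¹ * A⁻¹ * A : Finset G) ⊆ U := fun x hx => by
    simp only [hU, Finset.mem_union]; simp [hx]
  have s07 : (A⁻¹ * A⁻¹ * A⁻¹ : Finset G) ⊆ U := fun x hx => by
    simp only [hU, Finset.mem_union]; simp [hx]
  have s08 : (A * A : Finset G) ⊆ U := fun x hx => by
    simp only [hU, Finset.mem_union]; simp [hx]
  have s09 : (A * A⁻¹ : Finset G) ⊆ U := fun x hx => by
    simp only [hU, Finset.mem_union]; simp [hx]
  have s10 : (A⁻¹ * A : Finset G) ⊆ U := fun x hx => by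
    simp only [hU, Finset.mem_union]; simp [hx]
  have s11 : (A⁻¹ * A⁻¹ : Finset G) ⊆ U := fun x hx => by
    simp only [hU, Finset.mem_union]; simp [hx]
  have s12 : (A : Finset G) ⊆ U := fun x hx => by
    simp only [hU, Finset.mem_union]; simp [hx]
  have s13 : (A⁻¹ : Finset G) ⊆ U := fun x hx => by
    simp only [hU, Finset.mem_union]; simp [hx]
  have honeU : (1 : G) ∈ U := by
    obtain ⟨a, ha⟩ := hA
    refine s09 ?_
    rw [show (1 : G) = a * a⁻¹ by simp]
    exact mul_mem_mul ha (inv_mem_inv ha)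
  have hsub : (A ∪ A⁻¹ ∪ {1}) * (A ∪ A⁻¹ ∪ {1}) * (A ∪ A⁻¹ ∪ {1}) ⊆ U := by
    intro x hx
    obtain ⟨y, hy, c, hc, rfl⟩ := Finset.mem_mul.1 hx
    obtain ⟨a, ha, b, hb, rfl⟩ := Finset.mem_mul.1 hy
    simp only [Finset.mem_union, Finset.mem_singleton] at ha hb hc
    rcases ha with (ha | ha) | rfl <;> rcases hb with (hb | hb) | rfl <;>
      rcases hc with (hc | hc) | rfl <;>
      (try simp only [one_mul, mul_one]) <;>
      first
        | exact honeU
        | exact s00 (mul_mem_mul (mul_mem_mul ha hb) hc)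
        | exact s01 (mul_mem_mul (mul_mem_mul ha hb) hc)
        | exact s02 (mul_mem_mul (mul_mem_mul ha hb) hc)
        | exact s03 (mul_mem_mul (mul_mem_mul ha hb) hc)
        | exact s04 (mul_mem_mul (mul_mem_mul ha hb) hc)
        | exact s05 (mul_mem_mul (mul_mem_mul ha hb) hc)
        | exact s06 (mul_mem_mul (mul_mem_mul ha hb) hc)
        | exact s07 (mul_mem_mul (mul_mem_mul ha hb) hc)
        | exact s08 (mul_mem_mul ha hb)
        | exact s09 (mul_mem_mul ha hb)
        | exact s10 (mul_mem_mul ha hb)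
        | exact s11 (mul_mem_mul ha hb)
        | exact s08 (mul_mem_mul ha hc)
        | exact s09 (mul_mem_mul ha hc)
        | exact s10 (mul_mem_mul ha hc)
        | exact s11 (mul_mem_mul ha hc)
        | exact s08 (mul_mem_mul hb hc)
        | exact s09 (mul_mem_mul hb hc)
        | exact s10 (mul_mem_mul hb hc)
        | exact s11 (mul_mem_mul hb hc)
        | exact s12 ha
        | exact s12 hb
        | exact s12 hc
        | exact s13 ha
        | exact s13 hb
        | exact s13 hc
  have hUcardN : #U ≤ #(A * A * A) + #(A * A * A⁻¹) + #(A * A⁻¹ * A) +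
      #(A * A⁻¹ * A⁻¹) + #(A⁻¹ * A * A) + #(A⁻¹ * A * A⁻¹) + #(A⁻¹ * A⁻¹ * A) +
      #(A⁻¹ * A⁻¹ * A⁻¹) + #(A * A) + #(A * A⁻¹) + #(A⁻¹ * A) + #(A⁻¹ * A⁻¹) + #A + #A⁻¹ := by
    rw [hU]
    repeat refine le_trans (Finset.card_union_le _ _) (Nat.add_le_add_right ?_ _)
    exact le_rfl
  have h0 : ((( A ∪ A⁻¹ ∪ {1}) * (A ∪ A⁻¹ ∪ {1}) * (A ∪ A⁻¹ ∪ {1})).card : ℝ) ≤ #U := by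
    exact_mod_cast Finset.card_le_card hsub
  have hUcard : (#U : ℝ) ≤ (#(A * A * A) : ℝ) + #(A * A * A⁻¹) + #(A * A⁻¹ * A) +
      #(A * A⁻¹ * A⁻¹) + #(A⁻¹ * A * A) + #(A⁻¹ * A * A⁻¹) + #(A⁻¹ * A⁻¹ * A) +
      #(A⁻¹ * A⁻¹ * A⁻¹) + #(A * A) + #(A * A⁻¹) + #(A⁻¹ * A) + #(A⁻¹ * A⁻¹) + #A + #A⁻¹ := by
    exact_mod_cast hUcardN
  have hAinv : ((#A⁻¹ : ℕ) : ℝ) = (#A : ℝ) := by rw [card_inv]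
  have e1 : K * #A ≤ K ^ 3 * #A := by nlinarith
  have e2 : K ^ 2 * #A ≤ K ^ 3 * #A := by nlinarith
  have e3 : (#A : ℝ) ≤ K ^ 3 * #A := by nlinarith [e1, mul_le_mul_of_nonneg_right hK1 hApos.le]
  refine h0.trans (hUcard.trans ?_)
  rw [hAinv]
  linarith [htriple, hppn, hpnp, hpnn, hnpp, hnpn, hnnp, hnnn, hAA, hpn, hnp, hnn]
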